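/- Let H = (V,E) be a connected hypergraph and t = |V|. Then S(H^t) = t·S(H) and Mod_1(Ω(H)) = S(H), where H^t replaces each hyperedge by t parallel copies. -/

import Mathlib

open Finset
open scoped Classical

noncomputable section

variable {V E : Type*}

/-- The set of hyperedges meeting at least two parts of the partition `P` (the cut `δ(P)`). -/
def hcut [Fintype V] [DecidableEq V] [Fintype E] (edge : E → Finset V)
    (P : Finpartition (univ : Finset V)) : Finset E :=
  univ.filter fun e => ∃ p ∈ P.parts, ∃ q ∈ P.parts,
    p ≠ q ∧ (edge e ∩ p).Nonempty ∧ (edge e ∩ q).Nonempty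

/-- The hyperedges entirely contained in the vertex set `X`. -/
def edgesIn [DecidableEq V] [Fintype E] (edge : E → Finset V) (X : Finset V) : Finset E :=
  univ.filter fun e => edge e ⊆ X

/-- The strength `S(H)`. -/
def strength [Fintype V] [DecidableEq V] [Fintype E] (edge : E → Finset V) : ℝ :=
  sInf { r : ℝ | ∃ P : Finpartition (univ : Finset V), 2 ≤ P.parts.card ∧
    r = ((hcut edge P).card : ℝ) / ((P.parts.card : ℝ) - 1) }

/-- The weighted strength `S_σ(H)`. -/
def strengthW [Fintype V] [DecidableEq V] [Fintype E] (σ : E → ℝ) (edge : E → Finset V) : ℝ :=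
  sInf { r : ℝ | ∃ P : Finpartition (univ : Finset V), 2 ≤ P.parts.card ∧
    r = (∑ e ∈ hcut edge P, σ e) / ((P.parts.card : ℝ) - 1) }

/-- The fractional arboricity `D(H)`. -/
def arboricity [Fintype V] [DecidableEq V] [Fintype E] (edge : E → Finset V) : ℝ :=
  sSup { r : ℝ | ∃ X : Finset V, 2 ≤ X.card ∧
    r = ((edgesIn edge X).card : ℝ) / ((X.card : ℝ) - 1) }

/-- Connectivity of the subhypergraph induced by the vertex set `W`
(only hyperedges contained in `W` are used). -/
def ConnectedIn (edge : E → Finset V) (W : Finset V) : Prop :=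
  ∀ X ⊆ W, X.Nonempty → X ≠ W →
    ∃ e, edge e ⊆ W ∧ (edge e ∩ X).Nonempty ∧ ((edge e ∩ W) \ X).Nonempty

/-- Connectivity of the trace hypergraph on the vertex set `W`
(each hyperedge is replaced by its intersection with `W`, as in vertex deletion). -/
def ConnectedOn (edge : E → Finset V) (W : Finset V) : Prop :=
  ∀ X ⊆ W, X.Nonempty → X ≠ W →
    ∃ e, ((edge e ∩ W) ∩ X).Nonempty ∧ ((edge e ∩ W) \ X).Nonempty

/-- A hypergraph is connected if every nonempty proper vertex subset is crossed by a hyperedge. -/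
def HConnected [Fintype V] (edge : E → Finset V) : Prop :=
  ConnectedIn edge univ

/-- `H` is partition-connected if `|δ(P)| ≥ |P| - 1` for every partition `P` of `V`. -/
def PartitionConnected [Fintype V] [DecidableEq V] [Fintype E] (edge : E → Finset V) : Prop :=
  ∀ P : Finpartition (univ : Finset V), P.parts.card - 1 ≤ (hcut edge P).card

/-- A partition is feasible if each part induces a connected subhypergraph. -/
def Feasible [Fintype V] [DecidableEq V] (edge : E → Finset V) (P : Finpartition (univ : Finset V)) : Prop :=
  ∀ p ∈ P.parts, ConnectedIn edge p

/-- The edges of the shrunk hypergraph `H_P`: vertices are the parts of `P`, and a hyperedge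
becomes the set of parts it meets. -/
def shrunkEdge [Fintype V] [DecidableEq V] (edge : E → Finset V)
    (P : Finpartition (univ : Finset V)) (e : E) : Finset {p : Finset V // p ∈ P.parts} :=
  univ.filter fun p => (edge e ∩ p.1).Nonempty

/-- The shrunk hypergraph `H_P` is vertex-biconnected: it is connected and no single
vertex deletion disconnects it. -/
def ShrunkBiconnected [Fintype V] [DecidableEq V] [Fintype E] (edge : E → Finset V)
    (P : Finpartition (univ : Finset V)) : Prop :=
  ConnectedIn (shrunkEdge edge P) univ ∧
  ∀ p : {p : Finset V // p ∈ P.parts}, ConnectedOn (shrunkEdge edge P) (univ \ {p})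

/-- `F` is a hypertree: a hyperforest of size `|V| - 1`. -/
def IsHypertree [Fintype V] [DecidableEq V] (edge : E → Finset V) (F : Finset E) : Prop :=
  F.card = Fintype.card V - 1 ∧
  ∀ X : Finset V, X.Nonempty → (F.filter fun e => edge e ⊆ X).card ≤ X.card - 1

/-- `m` is the multiplicity vector of a multiset of hyperedges forming a hypertree on `V`. -/
def IsMultiTree [Fintype V] [DecidableEq V] [Fintype E] (edge : E → Finset V) (m : E → ℕ) : Prop :=
  (∑ e, m e) = Fintype.card V - 1 ∧
  ∀ X : Finset V, X.Nonempty → (∑ e ∈ edgesIn edge X, m e) ≤ X.card - 1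

/-- The multi-tree family `Ω(H)` as a set of usage vectors in `ℝ^E`. -/
def OmegaSet [Fintype V] [DecidableEq V] [Fintype E] (edge : E → Finset V) : Set (E → ℝ) :=
  { x | ∃ m : E → ℕ, IsMultiTree edge m ∧ x = fun e => (m e : ℝ) }

/-- The hypertree family `Γ(H)` as a set of (indicator) usage vectors in `ℝ^E`. -/
def GammaSet [Fintype V] [DecidableEq V] [Fintype E] (edge : E → Finset V) : Set (E → ℝ) :=
  { x | ∃ F : Finset E, IsHypertree edge F ∧ x = fun e => if e ∈ F then (1 : ℝ) else 0 }

/-- The admissible set of a family of usage vectors. -/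
def AdmSet [Fintype E] (G : Set (E → ℝ)) : Set (E → ℝ) :=
  { ρ | (∀ e, 0 ≤ ρ e) ∧ ∀ x ∈ G, 1 ≤ ∑ e, x e * ρ e }

/-- The weighted 1-modulus of a family of usage vectors. -/
def Mod1 [Fintype E] (σ : E → ℝ) (G : Set (E → ℝ)) : ℝ :=
  sInf { t : ℝ | ∃ ρ ∈ AdmSet G, t = ∑ e, σ e * ρ e }

/-- `w` is an extreme point of `S`: it lies in `S` and is not the midpoint of two
distinct points of `S`. -/
def IsExtremePt [Fintype E] (S : Set (E → ℝ)) (w : E → ℝ) : Prop :=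
  w ∈ S ∧ ∀ y ∈ S, ∀ z ∈ S, (∀ e, w e = (y e + z e) / 2) → y = z

/-- The rank function of the hypergraphic matroid `M(H)` (Frank et al.):
`r(F) = min { |V| - |P| + |δ_F(P)| }` over partitions `P` of `V`. -/
def hrank [Fintype V] [DecidableEq V] [Fintype E] [DecidableEq E]
    (edge : E → Finset V) (F : Finset E) : ℕ :=
  sInf { n : ℕ | ∃ P : Finpartition (univ : Finset V),
    n = Fintype.card V - P.parts.card + (hcut edge P ∩ F).card }

/-- The (unweighted) strength of the hypergraphic matroid `M(H)`. -/
def mstrength [Fintype V] [DecidableEq V] [Fintype E] [DecidableEq E]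
    (edge : E → Finset V) : ℝ :=
  sInf { r : ℝ | ∃ X : Finset E, hrank edge (univ \ X) < hrank edge univ ∧
    r = (X.card : ℝ) / ((hrank edge univ : ℝ) - (hrank edge (univ \ X) : ℝ)) }

/-- The fractional arboricity of the hypergraphic matroid `M(H)`. -/
def marboricity [Fintype V] [DecidableEq V] [Fintype E] [DecidableEq E]
    (edge : E → Finset V) : ℝ :=
  sSup { r : ℝ | ∃ X : Finset E, 0 < hrank edge X ∧ r = (X.card : ℝ) / (hrank edge X : ℝ) }

end

set_option linter.unusedSectionVars false

noncomputable section Stmt17Helpers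

namespace Stmt17

open Finset
open scoped Classical

variable {V E : Type*} [Fintype V] [DecidableEq V] [Fintype E] [DecidableEq E]

variable (edge : E → Finset V)

def hstep (A : Finset E) (u v : V) : Prop := ∃ a ∈ A, u ∈ edge a ∧ v ∈ edge a

def hreach (A : Finset E) : V → V → Prop := Relation.ReflTransGen (hstep edge A)

def hclass (A : Finset E) (v : V) : Finset V := univ.filter (fun u => hreach edge A v u)

def hclasses (A : Finset E) : Finset (Finset V) := univ.image (hclass edge A)

def hc (A : Finset E) : ℕ := (hclasses edge A).card

variable {edge}

lemma hstep_symm {A : Finset E} : Symmetric (hstep edge A) := by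
  rintro u v ⟨a, ha, h1, h2⟩; exact ⟨a, ha, h2, h1⟩

lemma hreach_refl {A : Finset E} (v : V) : hreach edge A v v := Relation.ReflTransGen.refl

lemma hreach_symm {A : Finset E} {u v : V} (h : hreach edge A u v) : hreach edge A v u :=
  by
    haveI : Std.Symm (hstep edge A) := ⟨fun a b h => hstep_symm h⟩
    exact (Relation.ReflTransGen.symmetric (r := hstep edge A)).symm _ _ h

lemma hreach_trans {A : Finset E} {u v w : V} (h : hreach edge A u v)
    (h' : hreach edge A v w) : hreach edge A u w := h.trans h'

lemma hreach_mono {A B : Finset E} (hBA : B ⊆ A) {u v : V} (h : hreach edge B u v) :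
    hreach edge A u v := by
  refine Relation.ReflTransGen.mono ?_ _ _ h
  rintro x y ⟨a, ha, h1, h2⟩; exact ⟨a, hBA ha, h1, h2⟩

lemma mem_hclass {A : Finset E} {u v : V} : u ∈ hclass edge A v ↔ hreach edge A v u := by
  simp [hclass]

lemma self_mem_hclass {A : Finset E} (v : V) : v ∈ hclass edge A v :=
  mem_hclass.2 (hreach_refl v)

lemma hclass_eq {A : Finset E} {u v : V} (h : hreach edge A u v) :
    hclass edge A u = hclass edge A v := by
  ext w; simp only [mem_hclass]
  exact ⟨fun h' => (hreach_symm h).trans h', fun h' => h.trans h'⟩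

lemma hreach_single {A : Finset E} {a : E} (ha : a ∈ A) {u v : V}
    (hu : u ∈ edge a) (hv : v ∈ edge a) : hreach edge A u v :=
  Relation.ReflTransGen.single ⟨a, ha, hu, hv⟩

lemma hclass_mem_hclasses {A : Finset E} (v : V) : hclass edge A v ∈ hclasses edge A :=
  mem_image_of_mem _ (mem_univ v)

/-- the component partition -/
def hpart (edge : E → Finset V) (A : Finset E) : Finpartition (univ : Finset V) where
  parts := hclasses edge A
  supIndep := by
    rw [supIndep_iff_pairwiseDisjoint]
    rintro p hp q hq hpq
    simp only [hclasses, coe_image, Set.mem_image, mem_coe] at hp hq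
    obtain ⟨u, -, rfl⟩ := hp
    obtain ⟨v, -, rfl⟩ := hq
    simp only [Function.onFun, id_eq]
    rw [Finset.disjoint_left]
    intro w hw hw'
    exact hpq (by rw [hclass_eq (mem_hclass.1 hw), hclass_eq (mem_hclass.1 hw')])
  sup_parts := by
    apply le_antisymm (Finset.sup_le fun p _ => Finset.subset_univ p)
    intro v _
    rw [Finset.mem_sup]
    exact ⟨hclass edge A v, hclass_mem_hclasses v, self_mem_hclass v⟩
  bot_notMem := by
    simp only [Finset.bot_eq_empty, hclasses, mem_image]
    rintro ⟨v, -, hv⟩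
    exact absurd (hv ▸ self_mem_hclass (edge := edge) (A := A) v) (by simp)

lemma hpart_parts {A : Finset E} : (hpart edge A).parts = hclasses edge A := rfl

lemma part_eq_hclass {A : Finset E} {p : Finset V} (hp : p ∈ hclasses edge A) {v : V}
    (hv : v ∈ p) : p = hclass edge A v := by
  simp only [hclasses, mem_image] at hp
  obtain ⟨u, -, rfl⟩ := hp
  exact hclass_eq (mem_hclass.1 hv)

lemma hcut_hpart_subset {A : Finset E} : hcut edge (hpart edge A) ⊆ univ \ A := by
  intro e he
  simp only [hcut, mem_filter, mem_univ, true_and] at he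
  obtain ⟨p, hp, q, hq, hpq, ⟨x, hx⟩, ⟨y, hy⟩⟩ := he
  simp only [mem_inter] at hx hy
  simp only [mem_sdiff, mem_univ, true_and]
  intro heA
  apply hpq
  rw [part_eq_hclass hp hx.2, part_eq_hclass hq hy.2]
  exact hclass_eq (hreach_single heA hx.1 hy.1)

end Stmt17

end Stmt17Helpers
noncomputable section Stmt17Helpers2

namespace Stmt17

open Finset
open scoped Classical

variable {V E : Type*} [Fintype V] [DecidableEq V] [Fintype E] [DecidableEq E]
variable {edge : E → Finset V}

lemma hreach_insert_iff {A : Finset E} {e : E} {u v : V} :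
    hreach edge (insert e A) u v ↔ hreach edge A u v ∨
      ((∃ x ∈ edge e, hreach edge A u x) ∧ ∃ y ∈ edge e, hreach edge A v y) := by
  constructor
  · intro h
    induction h with
    | refl => exact Or.inl (hreach_refl u)
    | tail hwv hstep ih =>
      rename_i w v'
      obtain ⟨a, ha, hw, hv'⟩ := hstep
      rcases Finset.mem_insert.1 ha with rfl | haA
      · rcases ih with h | ⟨h1, h2⟩
        · exact Or.inr ⟨⟨w, hw, h⟩, ⟨v', hv', hreach_refl v'⟩⟩
        · exact Or.inr ⟨h1, ⟨v', hv', hreach_refl v'⟩⟩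
      · have step : hreach edge A w v' := hreach_single haA hw hv'
        rcases ih with h | ⟨h1, ⟨y, hy, h2⟩⟩
        · exact Or.inl (h.trans step)
        · exact Or.inr ⟨h1, ⟨y, hy, (hreach_symm step).trans h2⟩⟩
  · rintro (h | ⟨⟨x, hx, h1⟩, ⟨y, hy, h2⟩⟩)
    · exact hreach_mono (Finset.subset_insert e A) h
    · have hxy : hreach edge (insert e A) x y :=
        hreach_single (Finset.mem_insert_self e A) hx hy
      exact ((hreach_mono (Finset.subset_insert e A) h1).trans hxy).trans
        (hreach_symm (hreach_mono (Finset.subset_insert e A) h2))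

lemma hclass_insert_of_not_meet {A : Finset E} {e : E} {v : V}
    (h : ∀ x ∈ edge e, ¬ hreach edge A v x) :
    hclass edge (insert e A) v = hclass edge A v := by
  ext u
  simp only [mem_hclass, hreach_insert_iff]
  constructor
  · rintro (h' | ⟨⟨x, hx, h1⟩, -⟩)
    · exact h'
    · exact absurd h1 (h x hx)
  · exact Or.inl

lemma hclass_insert_of_meet {A : Finset E} {e : E} {v x : V} (hx : x ∈ edge e)
    (hvx : hreach edge A v x) {w : V} (hw : w ∈ edge e) :
    hclass edge (insert e A) v = hclass edge (insert e A) w := by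
  apply hclass_eq
  exact hreach_symm <| (hreach_single (Finset.mem_insert_self e A) hw hx).trans
      (hreach_symm (hreach_mono (Finset.subset_insert e A) hvx))

/-- counting formula for inserting an edge with nonempty vertex set -/
lemma hc_insert {A : Finset E} {e : E} (he : (edge e).Nonempty) :
    hc edge (insert e A) + ((edge e).image (hclass edge A)).card = hc edge A + 1 := by
  classical
  obtain ⟨x0, hx0⟩ := he
  set M : Finset (Finset V) := (edge e).image (hclass edge A) with hM
  set U : Finset V := hclass edge (insert e A) x0 with hU
  -- the new classes are the old ones not meeting e, together with U
  have hclasses_insert : hclasses edge (insert e A) =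
      insert U ((hclasses edge A) \ M) := by
    ext p
    simp only [hclasses, mem_image, mem_insert, mem_sdiff, mem_univ, true_and, hM]
    constructor
    · rintro ⟨v, -, rfl⟩
      by_cases hmeet : ∃ x ∈ edge e, hreach edge A v x
      · obtain ⟨x, hx, hvx⟩ := hmeet
        exact Or.inl (hclass_insert_of_meet hx hvx hx0)
      · push_neg at hmeet
        rw [hclass_insert_of_not_meet hmeet]
        refine Or.inr ⟨⟨v, rfl⟩, ?_⟩
        rintro ⟨y, hy, hvy⟩
        exact hmeet y hy (mem_hclass.1 (hvy ▸ self_mem_hclass y))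
    · rintro (rfl | ⟨⟨v, rfl⟩, hnot⟩)
      · exact ⟨x0, rfl⟩
      · refine ⟨v, ?_⟩
        apply hclass_insert_of_not_meet
        intro x hx hvx
        exact hnot ⟨x, hx, (hclass_eq hvx).symm⟩
  have hMsub : M ⊆ hclasses edge A := by
    intro p hp
    obtain ⟨x, -, rfl⟩ := Finset.mem_image.1 hp
    exact hclass_mem_hclasses x
  have hx0U : x0 ∈ U := hU ▸ self_mem_hclass x0
  have hUnot : U ∉ (hclasses edge A) \ M := by
    simp only [mem_sdiff]
    rintro ⟨hUc, hUM⟩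
    apply hUM
    obtain ⟨v, -, hv⟩ := Finset.mem_image.1 hUc
    have : hreach edge A v x0 := mem_hclass.1 (hv ▸ hx0U : x0 ∈ hclass edge A v)
    rw [hM, Finset.mem_image]
    exact ⟨x0, hx0, by rw [← hclass_eq this, hv]⟩
  have hMle : M.card ≤ (hclasses edge A).card := Finset.card_le_card hMsub
  have h2 : hc edge (insert e A) = ((hclasses edge A) \ M).card + 1 := by
    rw [hc, hclasses_insert, Finset.card_insert_of_notMem hUnot]
  have h3 : hc edge A = (hclasses edge A).card := rfl
  rw [h2, Finset.card_sdiff_of_subset hMsub, h3]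
  omega

lemma hc_insert_of_empty {A : Finset E} {e : E} (he : edge e = ∅) :
    hc edge (insert e A) = hc edge A := by
  have : ∀ v, hclass edge (insert e A) v = hclass edge A v := by
    intro v
    apply hclass_insert_of_not_meet
    simp [he]
  unfold hc hclasses
  congr 1
  exact Finset.image_congr fun v _ => this v

lemma himage_card_le {A B : Finset E} (hBA : B ⊆ A) (e : E) :
    ((edge e).image (hclass edge A)).card ≤ ((edge e).image (hclass edge B)).card := by
  classical
  have : (edge e).image (hclass edge A) =
      ((edge e).image (hclass edge B)).image
        (fun p => univ.filter (fun u => ∃ x ∈ p, hreach edge A x u)) := by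
    rw [Finset.image_image]
    apply Finset.image_congr
    intro x _
    ext u
    simp only [Function.comp_apply, mem_hclass, Finset.mem_filter, mem_univ, true_and]
    constructor
    · intro h
      exact ⟨x, hreach_refl x, h⟩
    · rintro ⟨y, hy, hyu⟩
      exact (hreach_mono hBA hy).trans hyu
  rw [this]
  exact Finset.card_image_le

lemma hc_insert_le (A : Finset E) (e : E) : hc edge (insert e A) ≤ hc edge A := by
  rcases (edge e).eq_empty_or_nonempty with he | he
  · rw [hc_insert_of_empty he]
  · have h := hc_insert (A := A) he
    have : 1 ≤ ((edge e).image (hclass edge A)).card :=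
      Finset.card_pos.2 (he.image _)
    omega

lemma hc_submod {A B : Finset E} (hBA : B ⊆ A) (e : E) :
    hc edge A + hc edge (insert e B) ≤ hc edge B + hc edge (insert e A) := by
  rcases (edge e).eq_empty_or_nonempty with he | he
  · rw [hc_insert_of_empty he, hc_insert_of_empty he]
    omega
  · have h1 := hc_insert (A := A) he
    have h2 := hc_insert (A := B) he
    have h3 := himage_card_le (edge := edge) hBA e
    omega

lemma hc_empty : hc edge (∅ : Finset E) = Fintype.card V := by
  have : ∀ v : V, hclass edge (∅ : Finset E) v = {v} := by
    intro v
    ext u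
    simp only [mem_hclass, Finset.mem_singleton]
    constructor
    · intro h
      induction h with
      | refl => rfl
      | tail _ hstep ih => obtain ⟨a, ha, -⟩ := hstep; exact absurd ha (Finset.notMem_empty a)
    · rintro rfl; exact hreach_refl u
  unfold hc hclasses
  rw [Finset.image_congr (fun v _ => this v)]
  rw [Finset.card_image_of_injective _ fun a b h => Finset.singleton_injective h]
  exact Finset.card_univ

lemma hc_univ_of_connected [Nonempty V] (hconn : HConnected edge) :
    hc edge (univ : Finset E) = 1 := by
  have hall : ∀ v : V, hclass edge (univ : Finset E) v = univ := by
    intro v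
    by_contra hne
    obtain ⟨a, -, ⟨y, hy⟩, ⟨x, hx⟩⟩ := hconn (hclass edge univ v) (Finset.subset_univ _)
      ⟨v, self_mem_hclass v⟩ hne
    simp only [Finset.mem_inter] at hy
    simp only [Finset.mem_sdiff, Finset.mem_inter] at hx
    exact hx.2 (mem_hclass.2 ((mem_hclass.1 hy.2).trans
      (hreach_single (Finset.mem_univ a) hy.1 hx.1.1)))
  obtain ⟨v0⟩ := ‹Nonempty V›
  unfold hc hclasses
  rw [Finset.image_congr (fun v _ => hall v)]
  rw [Finset.image_const ⟨v0, Finset.mem_univ v0⟩]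
  exact Finset.card_singleton _

end Stmt17

end Stmt17Helpers2
noncomputable section Stmt17Helpers3

namespace Stmt17

open Finset
open scoped Classical

variable {V E : Type*} [Fintype V] [DecidableEq V] [Fintype E] [DecidableEq E]
variable {edge : E → Finset V}

lemma hc_le_card (A : Finset E) : hc edge A ≤ Fintype.card V :=
  le_trans Finset.card_image_le (le_of_eq Finset.card_univ)

lemma one_le_hc [Nonempty V] (A : Finset E) : 1 ≤ hc edge A :=
  Finset.card_pos.2 ((Finset.univ_nonempty).image _)

lemma mem_edgesIn {X : Finset V} {e : E} : e ∈ edgesIn edge X ↔ edge e ⊆ X := by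
  simp [edgesIn]

/-- vertices outside `X` are isolated in the subhypergraph of edges inside `X` -/
lemma hclass_edgesIn_of_not_mem {X : Finset V} {u : V} (hu : u ∉ X) :
    hclass edge (edgesIn edge X) u = {u} := by
  ext w
  simp only [mem_hclass, Finset.mem_singleton]
  constructor
  · intro h
    rcases h.cases_head with h' | ⟨c, ⟨a, ha, hu', -⟩, -⟩
    · exact h'.symm
    · exact absurd (mem_edgesIn.1 ha hu') hu
  · rintro rfl; exact hreach_refl w

lemma hclass_edgesIn_subset {X : Finset V} {x : V} (hx : x ∈ X) :
    hclass edge (edgesIn edge X) x ⊆ X := by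
  intro w hw
  have h := mem_hclass.1 hw
  induction h with
  | refl => exact hx
  | tail _ hstep _ =>
    obtain ⟨a, ha, -, hy⟩ := hstep
    exact mem_edgesIn.1 ha hy

lemma hc_edgesIn {X : Finset V} (hX : X.Nonempty) :
    Fintype.card V + 1 ≤ hc edge (edgesIn edge X) + X.card := by
  obtain ⟨x0, hx0⟩ := hX
  set s : Finset (Finset V) :=
    insert (hclass edge (edgesIn edge X) x0) ((univ \ X).image (fun u => hclass edge (edgesIn edge X) u)) with hs
  have hsub : s ⊆ hclasses edge (edgesIn edge X) := by
    intro p hp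
    rw [hs, Finset.mem_insert] at hp
    rcases hp with rfl | hp
    · exact hclass_mem_hclasses x0
    · obtain ⟨u, -, rfl⟩ := Finset.mem_image.1 hp
      exact hclass_mem_hclasses u
  have hcard : s.card = (Fintype.card V - X.card) + 1 := by
    rw [hs, Finset.card_insert_of_notMem, Finset.card_image_of_injOn]
    · rw [Finset.card_sdiff_of_subset (Finset.subset_univ X), Finset.card_univ]
    · intro u hu v hv huv
      rw [Finset.mem_coe, Finset.mem_sdiff] at hu hv
      dsimp only at huv
      rw [hclass_edgesIn_of_not_mem hu.2, hclass_edgesIn_of_not_mem hv.2] at huv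
      exact Finset.singleton_injective huv
    · intro hmem
      obtain ⟨u, hu, huv⟩ := Finset.mem_image.1 hmem
      rw [Finset.mem_sdiff] at hu
      rw [hclass_edgesIn_of_not_mem hu.2] at huv
      have : x0 ∈ ({u} : Finset V) := huv ▸ self_mem_hclass x0
      rw [Finset.mem_singleton] at this
      exact hu.2 (this ▸ hx0)
  have hle : s.card ≤ hc edge (edgesIn edge X) := Finset.card_le_card hsub
  have hXle : X.card ≤ Fintype.card V := (Finset.card_le_card (Finset.subset_univ X)).trans
    (le_of_eq Finset.card_univ)
  omega

lemma strength_nonneg : 0 ≤ strength edge := by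
  apply Real.sInf_nonneg
  rintro r ⟨P, hP, rfl⟩
  apply div_nonneg (by positivity)
  have : (2 : ℝ) ≤ P.parts.card := by exact_mod_cast hP
  linarith

lemma strength_le {P : Finpartition (univ : Finset V)} (hP : 2 ≤ P.parts.card) :
    strength edge ≤ ((hcut edge P).card : ℝ) / ((P.parts.card : ℝ) - 1) := by
  apply csInf_le
  · exact ⟨0, fun r hr => by
      obtain ⟨Q, hQ, rfl⟩ := hr
      apply div_nonneg (by positivity)
      have : (2 : ℝ) ≤ Q.parts.card := by exact_mod_cast hQ
      linarith⟩
  · exact ⟨P, hP, rfl⟩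

/-- key bound: `S(H) * (c(A) - 1) ≤ |E| - |A|`. -/
lemma strength_mul_le (A : Finset E) :
    strength edge * ((hc edge A : ℝ) - 1) ≤ (Fintype.card E : ℝ) - A.card := by
  have hA : (A.card : ℝ) ≤ Fintype.card E := by
    exact_mod_cast (Finset.card_le_card (Finset.subset_univ A)).trans
      (le_of_eq Finset.card_univ)
  by_cases h : 2 ≤ hc edge A
  · have h2 : (2 : ℝ) ≤ (hc edge A : ℝ) := by exact_mod_cast h
    have hpos : (0 : ℝ) < (hc edge A : ℝ) - 1 := by linarith
    have hle := strength_le (edge := edge) (P := hpart edge A) h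
    rw [div_eq_mul_inv] at hle
    have hcut_le : ((hcut edge (hpart edge A)).card : ℝ) ≤ (Fintype.card E : ℝ) - A.card := by
      have := Finset.card_le_card (hcut_hpart_subset (edge := edge) (A := A))
      rw [Finset.card_sdiff_of_subset (Finset.subset_univ A), Finset.card_univ] at this
      have hAE : A.card ≤ Fintype.card E := by
        exact_mod_cast (Finset.card_le_card (Finset.subset_univ A)).trans
          (le_of_eq Finset.card_univ)
      calc ((hcut edge (hpart edge A)).card : ℝ) ≤ ((Fintype.card E - A.card : ℕ) : ℝ) := by
            exact_mod_cast this
        _ = (Fintype.card E : ℝ) - A.card := by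
            rw [Nat.cast_sub hAE]
    calc strength edge * ((hc edge A : ℝ) - 1)
        ≤ (((hcut edge (hpart edge A)).card : ℝ) * ((hc edge A : ℝ) - 1)⁻¹) *
            ((hc edge A : ℝ) - 1) := by
          apply mul_le_mul_of_nonneg_right _ (le_of_lt hpos)
          exact hle
      _ = ((hcut edge (hpart edge A)).card : ℝ) := by
          field_simp
      _ ≤ (Fintype.card E : ℝ) - A.card := hcut_le
  · push_neg at h
    have h1 : ((hc edge A : ℝ) - 1) ≤ 0 := by
      have : (hc edge A : ℝ) ≤ 1 := by exact_mod_cast Nat.lt_succ_iff.1 h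
      linarith
    have := mul_nonpos_of_nonneg_of_nonpos (strength_nonneg (edge := edge)) h1
    linarith

end Stmt17

end Stmt17Helpers3
noncomputable section Stmt17Helpers4

namespace Stmt17

open Finset

lemma tele_real (F : ℕ → ℝ) : ∀ N i, i ≤ N →
    ∑ j ∈ Finset.Ico i N, (F j - F (j + 1)) = F i - F N := by
  intro N
  induction N with
  | zero => intro i hi; simp [Nat.le_zero.1 hi]
  | succ n ih =>
    intro i hi
    rcases Nat.lt_or_ge i (n + 1) with h | h
    · have hin : i ≤ n := Nat.lt_succ_iff.1 h
      rw [Finset.sum_Ico_succ_top hin, ih i hin]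
      ring
    · have : i = n + 1 := le_antisymm hi h
      subst this
      simp

lemma tele_nat (g : ℕ → ℕ) (hg : ∀ j, g (j + 1) ≤ g j) :
    ∀ n, ∑ j ∈ Finset.range n, (g j - g (j + 1)) = g 0 - g n := by
  have hmono : ∀ a b, a ≤ b → g b ≤ g a := by
    intro a b hab
    induction hab with
    | refl => exact le_rfl
    | step h ih => exact le_trans (hg _) ih
  intro n
  induction n with
  | zero => simp
  | succ n ih =>
    rw [Finset.sum_range_succ, ih]
    have h1 := hg n
    have h2 := hmono 0 n (Nat.zero_le n)
    omega

lemma range_filter_le (N j : ℕ) (hj : j < N) :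
    (Finset.range N).filter (fun i => i ≤ j) = Finset.range (j + 1) := by
  ext i
  simp only [Finset.mem_filter, Finset.mem_range]
  omega

lemma range_filter_ge (N i : ℕ) :
    (Finset.range N).filter (fun j => i ≤ j) = Finset.Ico i N := by
  ext j
  simp only [Finset.mem_filter, Finset.mem_range, Finset.mem_Ico]
  omega

lemma abel_bound (N : ℕ) (S : ℝ) (hS : 0 ≤ S) (r F : ℕ → ℝ)
    (hr0 : ∀ j, j < N → 0 ≤ r j)
    (hrmono : ∀ j, j + 1 < N → r j ≤ r (j + 1))
    (hFN : F N = 0)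
    (hSF : ∀ j, j < N → S * F j ≤ (N : ℝ) - j) :
    S * ∑ j ∈ Finset.range N, r j * (F j - F (j + 1)) ≤ ∑ j ∈ Finset.range N, r j := by
  classical
  set Δ : ℕ → ℝ := fun i => if i = 0 then r 0 else r i - r (i - 1) with hΔdef
  have hΔ : ∀ i, i < N → 0 ≤ Δ i := by
    intro i hi
    rcases Nat.eq_zero_or_pos i with rfl | hpos
    · simpa [hΔdef] using hr0 0 hi
    · have : Δ i = r i - r (i - 1) := by simp [hΔdef, Nat.pos_iff_ne_zero.1 hpos]
      rw [this, sub_nonneg]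
      have := hrmono (i - 1) (by omega)
      have hi1 : i - 1 + 1 = i := by omega
      rwa [hi1] at this
  have hΔsum : ∀ j, j < N → ∑ i ∈ Finset.range (j + 1), Δ i = r j := by
    intro j
    induction j with
    | zero => intro _; simp [hΔdef]
    | succ k ih =>
      intro hk
      rw [Finset.sum_range_succ, ih (by omega)]
      simp only [hΔdef, Nat.succ_ne_zero, if_false, Nat.add_sub_cancel]
      ring
  -- rewrite LHS as double sum and swap
  have key : S * ∑ j ∈ Finset.range N, r j * (F j - F (j + 1)) =
      ∑ i ∈ Finset.range N, Δ i * (S * F i) := by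
    rw [Finset.mul_sum]
    have step1 : ∀ j ∈ Finset.range N,
        S * (r j * (F j - F (j + 1))) =
          ∑ i ∈ Finset.range N, (if i ≤ j then Δ i * (S * (F j - F (j + 1))) else 0) := by
      intro j hj
      rw [Finset.mem_range] at hj
      have : ∑ i ∈ Finset.range N, (if i ≤ j then Δ i * (S * (F j - F (j + 1))) else 0) =
          (∑ i ∈ Finset.range (j + 1), Δ i) * (S * (F j - F (j + 1))) := by
        rw [Finset.sum_mul, ← range_filter_le N j hj, Finset.sum_filter]
      rw [this, hΔsum j hj]
      ring
    rw [Finset.sum_congr rfl step1, Finset.sum_comm]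
    apply Finset.sum_congr rfl
    intro i hi
    rw [Finset.mem_range] at hi
    have : ∑ j ∈ Finset.range N, (if i ≤ j then Δ i * (S * (F j - F (j + 1))) else 0) =
        Δ i * (S * ∑ j ∈ Finset.Ico i N, (F j - F (j + 1))) := by
      rw [Finset.mul_sum, Finset.mul_sum, ← range_filter_ge N i, Finset.sum_filter]
    rw [this, tele_real F N i (le_of_lt hi), hFN, sub_zero]
  rw [key]
  have step2 : ∑ i ∈ Finset.range N, Δ i * (S * F i) ≤
      ∑ i ∈ Finset.range N, Δ i * ((N : ℝ) - i) := by
    apply Finset.sum_le_sum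
    intro i hi
    rw [Finset.mem_range] at hi
    exact mul_le_mul_of_nonneg_left (hSF i hi) (hΔ i hi)
  refine step2.trans (le_of_eq ?_)
  -- reverse Abel: ∑ i Δ i * (N - i) = ∑ j r j
  have step3 : ∀ i ∈ Finset.range N, Δ i * ((N : ℝ) - i) =
      ∑ j ∈ Finset.range N, (if i ≤ j then Δ i else 0) := by
    intro i hi
    rw [Finset.mem_range] at hi
    have hcard : ((Finset.Ico i N).card : ℝ) = (N : ℝ) - i := by
      rw [Nat.card_Ico]
      rw [Nat.cast_sub (le_of_lt hi)]
    rw [← Finset.sum_filter, range_filter_ge N i, Finset.sum_const, nsmul_eq_mul, hcard]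
    ring
  rw [Finset.sum_congr rfl step3, Finset.sum_comm]
  apply Finset.sum_congr rfl
  intro j hj
  rw [Finset.mem_range] at hj
  rw [← Finset.sum_filter, range_filter_le N j hj, hΔsum j hj]

end Stmt17

end Stmt17Helpers4
noncomputable section Stmt17Helpers5

namespace Stmt17

open Finset
open scoped Classical

variable {V E : Type*} [Fintype V] [DecidableEq V] [Fintype E] [DecidableEq E]

lemma exists_multitree_cheap (edge : E → Finset V) (hconn : HConnected edge)
    (hV : 2 ≤ Fintype.card V) (ρ : E → ℝ) (hρ : ∀ e, 0 ≤ ρ e) :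
    ∃ m : E → ℕ, IsMultiTree edge m ∧
      strength edge * (∑ e, (m e : ℝ) * ρ e) ≤ ∑ e, ρ e := by
  haveI : Nonempty V := Fintype.card_pos_iff.1 (by omega)
  classical
  set N := Fintype.card E with hN
  -- a sorted enumeration of the edges
  obtain ⟨σ, hσ⟩ : ∃ σ : Fin N ≃ E, Monotone (ρ ∘ σ) := by
    refine ⟨(Tuple.sort (ρ ∘ (Fintype.equivFin E).symm)).trans (Fintype.equivFin E).symm, ?_⟩
    have : (ρ ∘ ((Tuple.sort (ρ ∘ (Fintype.equivFin E).symm)).trans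
        (Fintype.equivFin E).symm)) =
        (ρ ∘ (Fintype.equivFin E).symm) ∘ (Tuple.sort (ρ ∘ (Fintype.equivFin E).symm)) := rfl
    rw [this]
    exact Tuple.monotone_sort _
  set B : ℕ → Finset E := fun j => univ.filter (fun e => ((σ.symm e : ℕ) < j)) with hB
  have hB0 : B 0 = ∅ := by
    simp [hB]
  have hBtop : ∀ j, N ≤ j → B j = univ := by
    intro j hj
    rw [hB]
    apply Finset.filter_true_of_mem
    intro e _
    exact lt_of_lt_of_le (σ.symm e).isLt hj
  have hBsucc : ∀ j, (hj : j < N) → B (j + 1) = insert (σ ⟨j, hj⟩) (B j) := by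
    intro j hj
    ext e
    simp only [hB, Finset.mem_filter, Finset.mem_univ, true_and, Finset.mem_insert]
    constructor
    · intro h
      rcases Nat.lt_succ_iff_lt_or_eq.1 h with h' | h'
      · exact Or.inr h'
      · left
        have : σ.symm e = ⟨j, hj⟩ := Fin.ext h'
        rw [← this, Equiv.apply_symm_apply]
    · rintro (rfl | h)
      · simp only [Equiv.symm_apply_apply]
        omega
      · omega
  have hnotmem : ∀ j, (hj : j < N) → σ ⟨j, hj⟩ ∉ B j := by
    intro j hj
    simp [hB]
  have hBcard : ∀ j, j ≤ N → (B j).card = j := by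
    intro j
    induction j with
    | zero => intro _; rw [hB0]; simp
    | succ k ih =>
      intro hk
      have hkN : k < N := hk
      rw [hBsucc k hkN, Finset.card_insert_of_notMem (hnotmem k hkN), ih (le_of_lt hkN)]
  have hBanti : ∀ j, hc edge (B (j + 1)) ≤ hc edge (B j) := by
    intro j
    rcases Nat.lt_or_ge j N with hj | hj
    · rw [hBsucc j hj]
      exact hc_insert_le _ _
    · rw [hBtop j hj, hBtop (j + 1) (by omega)]
  have hcB0 : hc edge (B 0) = Fintype.card V := by rw [hB0]; exact hc_empty
  have hcBN : hc edge (B N) = 1 := by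
    rw [hBtop N le_rfl]; exact hc_univ_of_connected hconn
  set d : ℕ → ℕ := fun j => hc edge (B j) - hc edge (B (j + 1)) with hd
  set m : E → ℕ := fun e => d ((σ.symm e : ℕ)) with hm
  have hmσ : ∀ i : Fin N, m (σ i) = d (i : ℕ) := by
    intro i
    simp [hm]
  -- total sum
  have htotal : ∑ e, m e = Fintype.card V - 1 := by
    rw [← Equiv.sum_comp σ m]
    have : ∀ i : Fin N, m (σ i) = (fun j => d j) (i : ℕ) := hmσ
    rw [Finset.sum_congr rfl (fun i _ => this i), Fin.sum_univ_eq_sum_range]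
    rw [hd]
    rw [tele_nat _ hBanti N, hcB0, hcBN]
  refine ⟨m, ⟨htotal, ?_⟩, ?_⟩
  · -- the hyperforest constraint
    intro X hX
    have hXcard : 1 ≤ X.card := Finset.card_pos.2 hX
    have hXle : X.card ≤ Fintype.card V :=
      (Finset.card_le_card (Finset.subset_univ X)).trans (le_of_eq Finset.card_univ)
    set G : Finset E := edgesIn edge X with hG
    set D : ℕ → ℕ := fun j => hc edge (B j ∩ G) with hD
    have hDanti : ∀ j, D (j + 1) ≤ D j := by
      intro j
      rcases Nat.lt_or_ge j N with hj | hj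
      · rw [hD]
        rcases Classical.em (σ ⟨j, hj⟩ ∈ G) with hmem | hmem
        · simp only
          rw [hBsucc j hj, Finset.insert_inter_of_mem hmem]
          exact hc_insert_le _ _
        · simp only
          rw [hBsucc j hj, Finset.insert_inter_of_notMem hmem]
      · simp only [hD, hBtop j hj, hBtop (j + 1) (by omega), le_refl]
    set φ : ℕ → ℕ := fun j => if h : j < N then (if σ ⟨j, h⟩ ∈ G then d j else 0) else 0
      with hφ
    -- pointwise bound
    have hpt : ∀ j ∈ Finset.range N, φ j ≤ D j - D (j + 1) := by
      intro j hj
      rw [Finset.mem_range] at hj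
      simp only [hφ, dif_pos hj]
      by_cases hmem : σ ⟨j, hj⟩ ∈ G
      · rw [if_pos hmem]
        have hsub := hc_submod (edge := edge)
          (Finset.inter_subset_left : B j ∩ G ⊆ B j) (σ ⟨j, hj⟩)
        have h1 : hc edge (insert (σ ⟨j, hj⟩) (B j ∩ G)) ≤ hc edge (B j ∩ G) :=
          hc_insert_le _ _
        have h2 : hc edge (insert (σ ⟨j, hj⟩) (B j)) ≤ hc edge (B j) := hc_insert_le _ _
        have e1 : B (j + 1) = insert (σ ⟨j, hj⟩) (B j) := hBsucc j hj
        have e2 : B (j + 1) ∩ G = insert (σ ⟨j, hj⟩) (B j ∩ G) := by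
          rw [e1, Finset.insert_inter_of_mem hmem]
        have e1' : hc edge (B (j + 1)) = hc edge (insert (σ ⟨j, hj⟩) (B j)) := by rw [e1]
        have e2' : hc edge (B (j + 1) ∩ G) =
            hc edge (insert (σ ⟨j, hj⟩) (B j ∩ G)) := by rw [e2]
        simp only [hd, hD]
        omega
      · rw [if_neg hmem]
        exact Nat.zero_le _
    -- sum up
    have hsum : ∑ e ∈ edgesIn edge X, m e = ∑ j ∈ Finset.range N, φ j := by
      have step1 : ∑ e ∈ edgesIn edge X, m e = ∑ e, (if e ∈ G then m e else 0) := by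
        rw [Finset.sum_ite_mem, Finset.univ_inter, hG]
      rw [step1, ← Equiv.sum_comp σ (fun e => if e ∈ G then m e else 0)]
      have : ∀ i : Fin N, (if σ i ∈ G then m (σ i) else 0) = φ (i : ℕ) := by
        intro i
        simp only [hφ, i.isLt, dif_pos, Fin.eta, hmσ i]
      rw [Finset.sum_congr rfl (fun i _ => this i), Fin.sum_univ_eq_sum_range φ]
    rw [hsum]
    calc ∑ j ∈ Finset.range N, φ j
        ≤ ∑ j ∈ Finset.range N, (D j - D (j + 1)) := Finset.sum_le_sum hpt
      _ = D 0 - D N := tele_nat _ hDanti N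
      _ ≤ X.card - 1 := by
          have hD0 : D 0 = Fintype.card V := by
            simp only [hD, hB0, Finset.empty_inter]
            exact hc_empty
          have hDN : D N = hc edge G := by
            simp only [hD, hBtop N le_rfl, Finset.univ_inter]
          have hkey := hc_edgesIn (edge := edge) hX
          rw [← hG] at hkey
          omega
  · -- the cost bound
    set r : ℕ → ℝ := fun j => if h : j < N then ρ (σ ⟨j, h⟩) else 0 with hr
    set F : ℕ → ℝ := fun j => (hc edge (B j) : ℝ) - 1 with hF
    set ψ : ℕ → ℝ := fun j => r j * (F j - F (j + 1)) with hψ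
    have hcost : ∑ e, (m e : ℝ) * ρ e = ∑ j ∈ Finset.range N, ψ j := by
      rw [← Equiv.sum_comp σ (fun e => (m e : ℝ) * ρ e)]
      have : ∀ i : Fin N, (m (σ i) : ℝ) * ρ (σ i) = ψ (i : ℕ) := by
        intro i
        simp only [hψ, hmσ i, hr, hF, i.isLt, dif_pos, Fin.eta]
        have hcast : ((d (i : ℕ) : ℕ) : ℝ) =
            ((hc edge (B (i : ℕ)) : ℝ) - 1) - ((hc edge (B ((i : ℕ) + 1)) : ℝ) - 1) := by
          rw [hd]
          rw [Nat.cast_sub (hBanti (i : ℕ))]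
          ring
        rw [hcast]
        ring
      rw [Finset.sum_congr rfl (fun i _ => this i), Fin.sum_univ_eq_sum_range ψ]
    have hρsum : ∑ e, ρ e = ∑ j ∈ Finset.range N, r j := by
      rw [← Equiv.sum_comp σ ρ]
      have : ∀ i : Fin N, ρ (σ i) = r (i : ℕ) := by
        intro i
        simp only [hr, i.isLt, dif_pos, Fin.eta]
      rw [Finset.sum_congr rfl (fun i _ => this i), Fin.sum_univ_eq_sum_range r]
    rw [hcost, hρsum, hψ]
    apply abel_bound N (strength edge) strength_nonneg r F
    · intro j hj
      simp only [hr, dif_pos hj]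
      exact hρ _
    · intro j hj
      simp only [hr, dif_pos hj, dif_pos (by omega : j < N)]
      exact hσ (by simp [Fin.mk_le_mk])
    · simp only [hF, hcBN, Nat.cast_one, sub_self]
    · intro j hj
      simp only [hF]
      have := strength_mul_le (edge := edge) (B j)
      rw [hBcard j (le_of_lt hj)] at this
      exact this
end Stmt17

end Stmt17Helpers5
noncomputable section Stmt17Helpers6

namespace Stmt17

open Finset
open scoped Classical

variable {V E : Type*} [Fintype V] [DecidableEq V] [Fintype E] [DecidableEq E]

lemma multitree_zero_on_empty [Nonempty V] {edge : E → Finset V} {m : E → ℕ}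
    (hm : IsMultiTree edge m) {e : E} (he : edge e = ∅) : m e = 0 := by
  obtain ⟨v0⟩ := ‹Nonempty V›
  have h := hm.2 {v0} (Finset.singleton_nonempty v0)
  rw [Finset.card_singleton] at h
  have hsum : ∑ e' ∈ edgesIn edge {v0}, m e' = 0 := Nat.le_zero.1 h
  have hmem : e ∈ edgesIn edge {v0} := mem_edgesIn.2 (by rw [he]; exact Finset.empty_subset _)
  exact (Finset.sum_eq_zero_iff.1 hsum) e hmem

/-- every multitree crosses a partition at least `|P| - 1` times -/
lemma cut_sum_ge [Nonempty V] {edge : E → Finset V} {m : E → ℕ}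
    (hm : IsMultiTree edge m) (P : Finpartition (univ : Finset V)) :
    P.parts.card - 1 ≤ ∑ e ∈ hcut edge P, m e := by
  classical
  set s : Finset E := (univ \ hcut edge P).filter (fun e => (edge e).Nonempty) with hs
  have hsplit : ∑ e ∈ univ \ hcut edge P, m e + ∑ e ∈ hcut edge P, m e = ∑ e, m e :=
    Finset.sum_sdiff (Finset.subset_univ _)
  have hzero : ∑ e ∈ s, m e = ∑ e ∈ univ \ hcut edge P, m e := by
    apply Finset.sum_subset (Finset.filter_subset _ _)
    intro e he hnot
    rw [Finset.mem_filter] at hnot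
    have : ¬ (edge e).Nonempty := fun hne => hnot ⟨he, hne⟩
    rw [Finset.not_nonempty_iff_eq_empty] at this
    exact multitree_zero_on_empty hm this
  have hseq : s = P.parts.biUnion
      (fun p => (edgesIn edge p).filter (fun e => (edge e).Nonempty)) := by
    ext e
    simp only [hs, Finset.mem_filter, Finset.mem_sdiff, Finset.mem_univ, true_and,
      Finset.mem_biUnion, mem_edgesIn]
    constructor
    · rintro ⟨hnot, hne⟩
      obtain ⟨v, hv⟩ := hne
      obtain ⟨p, hp, hvp⟩ := P.exists_mem (Finset.mem_univ v)
      refine ⟨p, hp, fun w hw => ?_, ⟨v, hv⟩⟩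
      obtain ⟨q, hq, hwq⟩ := P.exists_mem (Finset.mem_univ w)
      by_cases hpq : q = p
      · exact hpq ▸ hwq
      · exfalso
        apply hnot
        simp only [hcut, Finset.mem_filter, Finset.mem_univ, true_and]
        exact ⟨p, hp, q, hq, fun h => hpq h.symm, ⟨v, Finset.mem_inter.2 ⟨hv, hvp⟩⟩,
          ⟨w, Finset.mem_inter.2 ⟨hw, hwq⟩⟩⟩
    · rintro ⟨p, hp, hsub, hne⟩
      refine ⟨?_, hne⟩
      intro hmem
      simp only [hcut, Finset.mem_filter, Finset.mem_univ, true_and] at hmem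
      obtain ⟨p', hp', q', hq', hpq', ⟨x, hx⟩, ⟨y, hy⟩⟩ := hmem
      rw [Finset.mem_inter] at hx hy
      have hxp : x ∈ p := hsub hx.1
      have hyp : y ∈ p := hsub hy.1
      exact hpq' ((P.eq_of_mem_parts hp' hp hx.2 hxp).trans
        (P.eq_of_mem_parts hp hq' hyp hy.2))
  have hdisj : (P.parts : Set (Finset V)).PairwiseDisjoint
      (fun p => (edgesIn edge p).filter (fun e => (edge e).Nonempty)) := by
    intro p hp q hq hpq
    simp only [Function.onFun]
    rw [Finset.disjoint_left]
    intro e he1 he2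
    rw [Finset.mem_filter, mem_edgesIn] at he1 he2
    obtain ⟨v, hv⟩ := he1.2
    exact hpq (P.eq_of_mem_parts hp hq (he1.1 hv) (he2.1 hv))
  have hbound : ∑ e ∈ s, m e + P.parts.card ≤ Fintype.card V := by
    rw [hseq, Finset.sum_biUnion hdisj]
    have hple : ∀ p ∈ P.parts,
        ∑ e ∈ (edgesIn edge p).filter (fun e => (edge e).Nonempty), m e + 1 ≤ p.card := by
      intro p hp
      have h1 : ∑ e ∈ (edgesIn edge p).filter (fun e => (edge e).Nonempty), m e ≤
          ∑ e ∈ edgesIn edge p, m e :=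
        Finset.sum_le_sum_of_subset (Finset.filter_subset _ _)
      have h2 := hm.2 p (P.nonempty_of_mem_parts hp)
      have h3 : 1 ≤ p.card := Finset.card_pos.2 (P.nonempty_of_mem_parts hp)
      omega
    calc (∑ p ∈ P.parts, ∑ e ∈ (edgesIn edge p).filter (fun e => (edge e).Nonempty), m e)
          + P.parts.card
        = ∑ p ∈ P.parts,
            (∑ e ∈ (edgesIn edge p).filter (fun e => (edge e).Nonempty), m e + 1) := by
          rw [Finset.sum_add_distrib, Finset.sum_const, smul_eq_mul, mul_one]
      _ ≤ ∑ p ∈ P.parts, p.card := Finset.sum_le_sum hple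
      _ = Fintype.card V := by rw [P.sum_card_parts, Finset.card_univ]
  have htotal := hm.1
  have hVpos : 1 ≤ Fintype.card V := Fintype.card_pos
  omega

end Stmt17

end Stmt17Helpers6
noncomputable section Stmt17Helpers7

namespace Stmt17

open Finset
open scoped Classical

variable {V E : Type*} [Fintype V] [DecidableEq V] [Fintype E] [DecidableEq E]

lemma hcut_prod (edge : E → Finset V) (t : ℕ) (P : Finpartition (univ : Finset V)) :
    hcut (fun p : E × Fin t => edge p.1) P = (hcut edge P) ×ˢ (univ : Finset (Fin t)) := by
  ext ⟨e, i⟩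
  simp only [hcut, Finset.mem_filter, Finset.mem_univ, true_and, Finset.mem_product,
    and_true]

lemma strength_prod (edge : E → Finset V) (t : ℕ) :
    strength (fun p : E × Fin t => edge p.1) = (t : ℝ) * strength edge := by
  unfold strength
  have hsmul := Real.sInf_smul_of_nonneg (by positivity : (0:ℝ) ≤ (t:ℝ))
    { r : ℝ | ∃ P : Finpartition (univ : Finset V), 2 ≤ P.parts.card ∧
      r = ((hcut edge P).card : ℝ) / ((P.parts.card : ℝ) - 1) }
  rw [smul_eq_mul] at hsmul
  rw [← hsmul]
  congr 1
  ext r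
  simp only [Set.mem_smul_set, Set.mem_setOf_eq, smul_eq_mul]
  constructor
  · rintro ⟨P, hP, rfl⟩
    refine ⟨((hcut edge P).card : ℝ) / ((P.parts.card : ℝ) - 1), ⟨P, hP, rfl⟩, ?_⟩
    rw [hcut_prod edge t P, Finset.card_product, Finset.card_univ, Fintype.card_fin]
    push_cast
    ring
  · rintro ⟨x, ⟨P, hP, rfl⟩, rfl⟩
    refine ⟨P, hP, ?_⟩
    rw [hcut_prod edge t P, Finset.card_product, Finset.card_univ, Fintype.card_fin]
    push_cast
    ring

lemma strength_small (edge : E → Finset V) (h : Fintype.card V ≤ 1) :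
    strength edge = 0 := by
  unfold strength
  convert Real.sInf_empty
  rw [Set.eq_empty_iff_forall_notMem]
  rintro r ⟨P, hP, -⟩
  have := P.card_parts_le_card
  rw [Finset.card_univ] at this
  omega

lemma mod1_small (edge : E → Finset V) (h : Fintype.card V ≤ 1) :
    Mod1 (fun _ => (1 : ℝ)) (OmegaSet edge) = 0 := by
  unfold Mod1
  convert Real.sInf_empty
  rw [Set.eq_empty_iff_forall_notMem]
  rintro r ⟨ρ, ⟨hρ0, hρ1⟩, -⟩
  have hzero : (fun e => ((0 : ℕ) : ℝ)) ∈ OmegaSet edge := by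
    refine ⟨fun _ => 0, ⟨?_, ?_⟩, rfl⟩
    · simp
      omega
    · intro X _
      simp
  have := hρ1 _ hzero
  simp at this
  linarith

lemma mod1_eq_strength (edge : E → Finset V) (hconn : HConnected edge) :
    Mod1 (fun _ => (1 : ℝ)) (OmegaSet edge) = strength edge := by
  rcases le_or_gt (Fintype.card V) 1 with hsmall | hbig
  · rw [mod1_small edge hsmall, strength_small edge hsmall]
  · have hV : 2 ≤ Fintype.card V := hbig
    haveI : Nonempty V := Fintype.card_pos_iff.1 (by omega)
    apply le_antisymm
    · -- Mod1 ≤ strength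
      unfold strength
      apply le_csInf
      · refine ⟨((hcut edge (⊥ : Finpartition (univ : Finset V))).card : ℝ) /
          (((⊥ : Finpartition (univ : Finset V)).parts.card : ℝ) - 1),
          ⟨⊥, ?_, rfl⟩⟩
        rw [Finpartition.card_bot, Finset.card_univ]
        exact hV
      · rintro b ⟨P, hP, rfl⟩
        set k := P.parts.card with hk
        have hkpos : (0 : ℝ) < (k : ℝ) - 1 := by
          have : (2 : ℝ) ≤ (k : ℝ) := by exact_mod_cast hP
          linarith
        set ρP : E → ℝ := fun e => if e ∈ hcut edge P then ((k : ℝ) - 1)⁻¹ else 0 with hρP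
        have hadm : ρP ∈ AdmSet (OmegaSet edge) := by
          constructor
          · intro e
            rw [hρP]
            dsimp only
            split
            · positivity
            · exact le_rfl
          · rintro x ⟨mm, hmm, rfl⟩
            have hkey := cut_sum_ge hmm P
            have hcast : ((k : ℝ) - 1) ≤ ∑ e ∈ hcut edge P, (mm e : ℝ) := by
              have h1 : ((k - 1 : ℕ) : ℝ) ≤ ((∑ e ∈ hcut edge P, mm e : ℕ) : ℝ) := by
                exact_mod_cast hkey
              rw [Nat.cast_sub (by omega : 1 ≤ k)] at h1
              push_cast at h1 ⊢
              exact h1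
            have : ∑ e, (mm e : ℝ) * ρP e = (∑ e ∈ hcut edge P, (mm e : ℝ)) * ((k:ℝ)-1)⁻¹ := by
              simp only [hρP, mul_ite, mul_zero]
              rw [Finset.sum_ite_mem, Finset.univ_inter, Finset.sum_mul]
            rw [this]
            calc (1 : ℝ) = ((k : ℝ) - 1) * ((k : ℝ) - 1)⁻¹ :=
                  (mul_inv_cancel₀ (ne_of_gt hkpos)).symm
              _ ≤ (∑ e ∈ hcut edge P, (mm e : ℝ)) * ((k : ℝ) - 1)⁻¹ :=
                  mul_le_mul_of_nonneg_right hcast (by positivity)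
        apply csInf_le
        · refine ⟨0, fun t ht => ?_⟩
          obtain ⟨ρ, hρ, rfl⟩ := ht
          exact Finset.sum_nonneg fun e _ => by
            simpa using hρ.1 e
        · refine ⟨ρP, hadm, ?_⟩
          have : ∑ e, (fun _ => (1:ℝ)) e * ρP e =
              ((hcut edge P).card : ℝ) * ((k : ℝ) - 1)⁻¹ := by
            simp only [hρP, one_mul]
            rw [Finset.sum_ite_mem, Finset.univ_inter, Finset.sum_const, nsmul_eq_mul]
          rw [this, div_eq_mul_inv]
    · -- strength ≤ Mod1
      apply le_csInf
      · refine ⟨∑ e, (fun _ => (1:ℝ)) e * (fun _ => (1:ℝ)) e, (fun _ => (1:ℝ)), ⟨?_, ?_⟩, rfl⟩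
        · intro e; exact zero_le_one
        · rintro x ⟨mm, hmm, rfl⟩
          have h1 : (∑ e, mm e : ℕ) = Fintype.card V - 1 := hmm.1
          have : ((Fintype.card V - 1 : ℕ) : ℝ) = ∑ e, (mm e : ℝ) := by
            rw [← h1]; push_cast; rfl
          simp only [mul_one]
          rw [← this]
          have : (1 : ℕ) ≤ Fintype.card V - 1 := by omega
          exact_mod_cast this
      · rintro b ⟨ρ, hρadm, rfl⟩
        obtain ⟨m, hmtree, hcheap⟩ := exists_multitree_cheap edge hconn hV ρ hρadm.1
        have h1 : 1 ≤ ∑ e, (m e : ℝ) * ρ e := hρadm.2 _ ⟨m, hmtree, rfl⟩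
        calc strength edge = strength edge * 1 := (mul_one _).symm
          _ ≤ strength edge * ∑ e, (m e : ℝ) * ρ e :=
              mul_le_mul_of_nonneg_left h1 strength_nonneg
          _ ≤ ∑ e, ρ e := hcheap
          _ = ∑ e, (fun _ => (1:ℝ)) e * ρ e := by simp

end Stmt17

end Stmt17Helpers7

/-- For a connected hypergraph `H` and `t = |V|`,
`S(H^t) = t·S(H)` and `Mod_1(Ω(H)) = S(H)`. -/
theorem stmt17 {V E : Type*} [Fintype V] [DecidableEq V] [Fintype E] [DecidableEq E]
    (edge : E → Finset V) (hconn : HConnected edge) :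
    strength (fun p : E × Fin (Fintype.card V) => edge p.1) =
      (Fintype.card V : ℝ) * strength edge ∧
    Mod1 (fun _ => (1 : ℝ)) (OmegaSet edge) = strength edge := by
  exact ⟨Stmt17.strength_prod edge (Fintype.card V), Stmt17.mod1_eq_strength edge hconn⟩
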